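/- For fixed α with 0 ≤ α < 1, the function β ↦ f_A(α,β) is symmetric about β = 1/2 and increasing up to 1/2: (i) f_A(α,β) = f_A(α,1−β) for all β with α/2 ≤ β ≤ 1−α/2; (ii) if α/2 ≤ β₁ ≤ β₂ ≤ 1/2 then f_A(α,β₁) ≤ f_A(α,β₂). -/

import Mathlib

/-- Binary entropy function (base-2 logs), with the convention `0 * log 0 = 0`. -/
noncomputable def binEnt (x : ℝ) : ℝ :=
  -(x * Real.logb 2 x) - (1 - x) * Real.logb 2 (1 - x)

/-- The spectral shape exponent of the accumulator:
`f_A(α,β) = α − h(β) + (1−α)·h((β−α/2)/(1−α))`. -/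
noncomputable def fA (α β : ℝ) : ℝ :=
  α - binEnt β + (1 - α) * binEnt ((β - α / 2) / (1 - α))

/-- The spectral shape exponent of the discrete derivative:
`f_D(α,β) = (1−α)·h(β/(2(1−α))) + α·h(β/(2α)) − h(α)`. -/
noncomputable def fD (α β : ℝ) : ℝ :=
  (1 - α) * binEnt (β / (2 * (1 - α))) + α * binEnt (β / (2 * α)) - binEnt α

lemma binEnt_eq (x : ℝ) : binEnt x = Real.binEntropy x / Real.log 2 := by
  simp [binEnt, Real.binEntropy, Real.logb, Real.log_inv]
  ring

lemma binEnt_one_sub (x : ℝ) : binEnt (1 - x) = binEnt x := by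
  simp [binEnt_eq]

lemma fA_hasDerivAt (α : ℝ) (hα0 : 0 ≤ α) (hα1 : α < 1) {β : ℝ}
    (h1 : α / 2 < β) (h2 : β < 1 / 2) :
    HasDerivAt (fun b => fA α b)
      ((Real.log β - Real.log (1 - β) +
        (Real.log (1 - (β - α / 2) / (1 - α)) - Real.log ((β - α / 2) / (1 - α)))) /
        Real.log 2) β := by
  have hs : (0:ℝ) < 1 - α := by linarith
  set t : ℝ := (β - α / 2) / (1 - α) with ht
  have ht0 : 0 < t := div_pos (by linarith) hs
  have ht1 : t < 1 := by
    rw [ht, div_lt_one hs]; linarith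
  have hβ0 : (0:ℝ) < β := lt_of_le_of_lt (by linarith) h1
  have hβ1 : β < 1 := by linarith
  have hinner : HasDerivAt (fun b : ℝ => (b - α / 2) / (1 - α)) ((1 - α)⁻¹) β := by
    simpa using ((hasDerivAt_id β).sub_const (α / 2)).div_const (1 - α)
  have hb1 : HasDerivAt Real.binEntropy (Real.log (1 - β) - Real.log β) β :=
    Real.hasDerivAt_binEntropy hβ0.ne' hβ1.ne
  have hb2 : HasDerivAt Real.binEntropy (Real.log (1 - t) - Real.log t) t :=
    Real.hasDerivAt_binEntropy ht0.ne' ht1.ne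
  have hcomp : HasDerivAt (fun b : ℝ => Real.binEntropy ((b - α / 2) / (1 - α)))
      ((Real.log (1 - t) - Real.log t) * (1 - α)⁻¹) β := by
    have hc := hb2.comp β hinner
    exact hc
  have : HasDerivAt (fun b : ℝ => α - Real.binEntropy b / Real.log 2 +
      (1 - α) * (Real.binEntropy ((b - α / 2) / (1 - α)) / Real.log 2))
      (-( (Real.log (1 - β) - Real.log β) / Real.log 2) +
        (1 - α) * ((Real.log (1 - t) - Real.log t) * (1 - α)⁻¹ / Real.log 2)) β := by
    exact ((hb1.div_const (Real.log 2)).const_sub α).add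
      (((hcomp.div_const (Real.log 2)).const_mul (1 - α)))
  have heq : (fun b : ℝ => α - Real.binEntropy b / Real.log 2 +
      (1 - α) * (Real.binEntropy ((b - α / 2) / (1 - α)) / Real.log 2)) = fun b => fA α b := by
    funext b; simp only [fA, binEnt_eq]
  rw [heq] at this
  convert this using 1
  field_simp
  ring

/-- `β ↦ f_A(α,β)` is symmetric about `β = 1/2` and increasing up to `1/2`. -/
theorem fA_symm_and_mono_right (α : ℝ) (hα0 : 0 ≤ α) (hα1 : α < 1) :
    (∀ β : ℝ, α / 2 ≤ β → β ≤ 1 - α / 2 → fA α β = fA α (1 - β)) ∧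
    (∀ β₁ β₂ : ℝ, α / 2 ≤ β₁ → β₁ ≤ β₂ → β₂ ≤ 1 / 2 → fA α β₁ ≤ fA α β₂) := by
  have hs : (0:ℝ) < 1 - α := by linarith
  constructor
  · intro β _ _
    have harg : (1 - β - α / 2) / (1 - α) = 1 - (β - α / 2) / (1 - α) := by
      field_simp; ring
    simp only [fA]
    rw [binEnt_one_sub β, harg, binEnt_one_sub]
  · intro β₁ β₂ hb1 h12 hb2
    have hmono : MonotoneOn (fun b => fA α b) (Set.Icc (α / 2) (1 / 2)) := by
      apply monotoneOn_of_deriv_nonneg (convex_Icc _ _)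
      · -- continuity
        have hc : Continuous (fun b : ℝ => α - Real.binEntropy b / Real.log 2 +
            (1 - α) * (Real.binEntropy ((b - α / 2) / (1 - α)) / Real.log 2)) := by
          fun_prop
        exact hc.continuousOn.congr (fun x _ => by simp only [fA, binEnt_eq])
      all_goals
        intro x hx
        rw [interior_Icc] at hx
        have hd := fA_hasDerivAt α hα0 hα1 hx.1 hx.2
      · exact hd.differentiableAt.differentiableWithinAt
      · rw [hd.deriv]
        set t : ℝ := (x - α / 2) / (1 - α) with htdef
        have hx0 : (0:ℝ) < x := lt_of_le_of_lt (by linarith) hx.1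
        have hx1 : x < 1 := by linarith [hx.2]
        have ht0 : 0 < t := div_pos (by linarith [hx.1]) hs
        have ht1 : t < 1 := by rw [htdef, div_lt_one hs]; linarith [hx.2]
        have htx : t ≤ x := by
          rw [htdef, div_le_iff₀ hs]
          nlinarith [hx.2]
        have key : Real.log (1 - x) + Real.log t ≤ Real.log x + Real.log (1 - t) := by
          rw [← Real.log_mul (by linarith) ht0.ne', ← Real.log_mul hx0.ne' (by linarith)]
          apply Real.log_le_log (mul_pos (by linarith) ht0)
          nlinarith
        have h2 : (0:ℝ) < Real.log 2 := Real.log_pos (by norm_num)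
        apply div_nonneg _ h2.le
        linarith
    exact hmono ⟨hb1, le_trans h12 hb2⟩ ⟨le_trans hb1 h12, hb2⟩ h12
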